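/- Let Γ be an ILX-MCS, B a formula, and S a set of formulas such that for every finite S' ⊆ S, ¬(B ▷ ⋁_{S_i∈S'}¬S_i) ∈ Γ. Then there exists an ILX-MCS Δ with Γ ≺_S Δ, B ∈ Δ, and □¬B ∈ Δ. -/

import Mathlib

inductive ILForm : Type
  | bot : ILForm
  | var : ℕ → ILForm
  | imp : ILForm → ILForm → ILForm
  | box : ILForm → ILForm
  | rhd : ILForm → ILForm → ILForm
  deriving DecidableEq

namespace ILForm

def neg (A : ILForm) : ILForm := A.imp ILForm.bot
def or (A B : ILForm) : ILForm := A.neg.imp B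
def and (A B : ILForm) : ILForm := (A.imp B.neg).neg
def dia (A : ILForm) : ILForm := A.neg.box.neg

end ILForm

/-- A Boolean valuation: respects `⊥` and `→`, arbitrary on variables, boxes and `▷`. -/
def IsBoolVal (v : ILForm → Bool) : Prop :=
  v ILForm.bot = false ∧ ∀ A B : ILForm, v (A.imp B) = (!(v A) || v B)

/-- Classical tautologies in the modal language. -/
def ILTaut (A : ILForm) : Prop := ∀ v, IsBoolVal v → v A = true

/-- Provability in the interpretability logic IL. -/
inductive ILProv : ILForm → Prop
  | taut {A : ILForm} : ILTaut A → ILProv A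
  | K {A B : ILForm} : ILProv (((A.imp B).box).imp ((A.box).imp (B.box)))
  | L {A : ILForm} : ILProv ((((A.box).imp A).box).imp (A.box))
  | J1 {A B : ILForm} : ILProv (((A.imp B).box).imp (A.rhd B))
  | J2 {A B C : ILForm} : ILProv (((A.rhd B).and (B.rhd C)).imp (A.rhd C))
  | J3 {A B C : ILForm} : ILProv (((A.rhd C).and (B.rhd C)).imp ((A.or B).rhd C))
  | J4 {A B : ILForm} : ILProv ((A.rhd B).imp ((A.dia).imp (B.dia)))
  | J5 {A : ILForm} : ILProv ((A.dia).rhd A)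
  | mp {A B : ILForm} : ILProv (A.imp B) → ILProv A → ILProv B
  | nec {A : ILForm} : ILProv A → ILProv (A.box)

/-- An extension of IL: contains all IL theorems, closed under modus ponens and necessitation. -/
structure ILExtension (P : ILForm → Prop) : Prop where
  il : ∀ {A}, ILProv A → P A
  mp : ∀ {A B}, P (A.imp B) → P A → P B
  nec : ∀ {A}, P A → P (A.box)

/-- Derivability from a set of assumptions in the logic `P`. -/
inductive Deriv (P : ILForm → Prop) (S : Set ILForm) : ILForm → Prop
  | thm {A : ILForm} : P A → Deriv P S A
  | mem {A : ILForm} : A ∈ S → Deriv P S A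
  | mp {A B : ILForm} : Deriv P S (A.imp B) → Deriv P S A → Deriv P S B

def ILConsistent (P : ILForm → Prop) (S : Set ILForm) : Prop := ¬ Deriv P S ILForm.bot

/-- Maximal consistent set w.r.t. the logic `P`. -/
def ILMCS (P : ILForm → Prop) (S : Set ILForm) : Prop :=
  ILConsistent P S ∧ ∀ T : Set ILForm, S ⊂ T → ¬ ILConsistent P T

/-- Finite disjunction; the empty disjunction is `⊥`. -/
def bigOr : List ILForm → ILForm
  | [] => ILForm.bot
  | A :: l => A.or (bigOr l)

/-- `Assuring Γ Δ S` ("Γ ≺_S Δ"): Δ is an S-assuring successor of Γ. -/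
def Assuring (Γ Δ : Set ILForm) (S : Set ILForm) : Prop :=
  ∀ (A : ILForm) (L : List ILForm), (∀ B ∈ L, B ∈ S) →
    (A.neg.rhd (bigOr (L.map ILForm.neg))) ∈ Γ → A ∈ Δ ∧ A.box ∈ Δ

/-- `Succ Γ Δ` ("Γ ≺ Δ"): whenever □A ∈ Γ, both A and □A are in Δ. -/
def Succ (Γ Δ : Set ILForm) : Prop :=
  ∀ A : ILForm, A.box ∈ Γ → A ∈ Δ ∧ A.box ∈ Δ

/- ======================= Auxiliary development ======================= -/

section BoolVal

variable {v : ILForm → Bool}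

lemma val_neg (hv : IsBoolVal v) (A : ILForm) : v A.neg = !v A := by
  rw [ILForm.neg, hv.2, hv.1, Bool.or_false]

lemma val_or (hv : IsBoolVal v) (A B : ILForm) : v (A.or B) = (v A || v B) := by
  rw [ILForm.or, hv.2, val_neg hv, Bool.not_not]

lemma val_and (hv : IsBoolVal v) (A B : ILForm) : v (A.and B) = (v A && v B) := by
  rw [ILForm.and, val_neg hv, hv.2, val_neg hv]
  cases v A <;> cases v B <;> rfl

lemma val_dia (hv : IsBoolVal v) (A : ILForm) : v A.dia = !v A.neg.box := val_neg hv _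

lemma val_bigOr_append (hv : IsBoolVal v) (m m' : List ILForm) :
    v (bigOr (m ++ m')) = (v (bigOr m) || v (bigOr m')) := by
  induction m with
  | nil => simp [bigOr, hv.1]
  | cons a m ih =>
      show v (ILForm.or a (bigOr (m ++ m'))) = _
      rw [val_or hv, ih]
      show _ = (v (ILForm.or a (bigOr m)) || _)
      rw [val_or hv, Bool.or_assoc]

end BoolVal

section Tauts

lemma t_id (A : ILForm) : ILTaut (A.imp A) := by
  intro v hv; simp only [hv.2]; cases v A <;> rfl

lemma t_w (A B : ILForm) : ILTaut (A.imp (B.imp A)) := by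
  intro v hv; simp only [hv.2]; cases v A <;> cases v B <;> rfl

lemma t_mono (A B C : ILForm) : ILTaut ((B.imp C).imp ((A.imp B).imp (A.imp C))) := by
  intro v hv; simp only [hv.2]; cases v A <;> cases v B <;> cases v C <;> rfl

lemma t_dist4 (X F G H : ILForm) :
    ILTaut ((F.imp (G.imp H)).imp ((X.imp F).imp ((X.imp G).imp (X.imp H)))) := by
  intro v hv; simp only [hv.2]
  cases v X <;> cases v F <;> cases v G <;> cases v H <;> rfl

lemma t_and (A B : ILForm) : ILTaut (A.imp (B.imp (A.and B))) := by
  intro v hv; simp only [val_and hv, hv.2]; cases v A <;> cases v B <;> rfl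

lemma t_and_l (A B : ILForm) : ILTaut ((A.and B).imp A) := by
  intro v hv; simp only [val_and hv, hv.2]; cases v A <;> cases v B <;> rfl

lemma t_and_r (A B : ILForm) : ILTaut ((A.and B).imp B) := by
  intro v hv; simp only [val_and hv, hv.2]; cases v A <;> cases v B <;> rfl

lemma t_curry (A B C : ILForm) : ILTaut (((A.and B).imp C).imp (A.imp (B.imp C))) := by
  intro v hv; simp only [val_and hv, hv.2]
  cases v A <;> cases v B <;> cases v C <;> rfl

lemma t_flip (A B C : ILForm) : ILTaut ((A.imp (B.imp C)).imp (B.imp (A.imp C))) := by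
  intro v hv; simp only [hv.2]; cases v A <;> cases v B <;> cases v C <;> rfl

lemma t_nn (A : ILForm) : ILTaut (A.neg.neg.imp A) := by
  intro v hv; simp only [val_neg hv, hv.2]; cases v A <;> rfl

lemma t_Nor (A' A : ILForm) : ILTaut (((A'.and A).neg).imp (A'.neg.or A.neg)) := by
  intro v hv; simp only [val_and hv, val_or hv, val_neg hv, hv.2]
  cases v A' <;> cases v A <;> rfl

lemma t_comb (p1 q1 p2 q2 r s : ILForm) :
    ILTaut ((p1.imp q1).imp ((p2.imp q2).imp
      ((q1.imp (q2.imp r)).imp ((r.imp s).imp (p1.imp (p2.imp s)))))) := by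
  intro v hv; simp only [hv.2]
  cases v p1 <;> cases v q1 <;> cases v p2 <;> cases v q2 <;> cases v r <;> cases v s <;> rfl

lemma t_Cneg (B : ILForm) :
    ILTaut (((B.and B.neg.box).neg).imp ((B.neg.box).imp B.neg)) := by
  intro v hv; simp only [val_and hv, val_neg hv, hv.2]
  cases v B <;> cases v (B.neg.box) <;> rfl

lemma t_Lglue (B : ILForm) :
    ILTaut ((((B.and B.neg.box).neg.box).imp (B.neg.box)).imp
      (B.imp ((B.and B.neg.box).or ((B.and B.neg.box).dia)))) := by
  intro v hv; simp only [val_dia hv, val_and hv, val_or hv, val_neg hv, hv.2]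
  cases v B <;> cases v (B.neg.box) <;> cases v ((B.and B.neg.box).neg.box) <;> rfl

lemma t_main (B A : ILForm) :
    ILTaut (((A.neg.neg.box).imp A.box).imp
      (((((B.and B.neg.box).and (A.and A.box))).imp ILForm.bot).imp
        ((B.and B.neg.box).imp ((A.neg).or (A.neg.dia))))) := by
  intro v hv; simp only [val_dia hv, val_and hv, val_or hv, val_neg hv, hv.2, hv.1]
  cases v B <;> cases v (B.neg.box) <;> cases v A <;> cases v (A.box) <;>
    cases v (A.neg.neg.box) <;> rfl

lemma t_stepB (I B A : ILForm) :
    ILTaut ((I.imp ((((B.and B.neg.box).and (A.and A.box))).imp ILForm.bot)).imp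
      ((B.imp I).imp ((((B.and B.neg.box).and (A.and A.box))).imp ILForm.bot))) := by
  intro v hv; simp only [val_and hv, val_neg hv, hv.2, hv.1]
  cases v I <;> cases v B <;> cases v (B.neg.box) <;> cases v A <;> cases v (A.box) <;> rfl

lemma t_stepBox (I B A : ILForm) :
    ILTaut ((I.imp ((((B.and B.neg.box).and (A.and A.box))).imp ILForm.bot)).imp
      (((B.neg.box).imp I).imp ((((B.and B.neg.box).and (A.and A.box))).imp ILForm.bot))) := by
  intro v hv; simp only [val_and hv, val_neg hv, hv.2, hv.1]
  cases v I <;> cases v B <;> cases v (B.neg.box) <;> cases v A <;> cases v (A.box) <;> rfl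

lemma t_stepA (I B A' A : ILForm) :
    ILTaut ((((A'.and A).box).imp A.box).imp
      ((I.imp (((B.and B.neg.box).and (A.and A.box)).imp ILForm.bot)).imp
        ((A'.imp I).imp
          (((B.and B.neg.box).and ((A'.and A).and ((A'.and A).box))).imp ILForm.bot)))) := by
  intro v hv; simp only [val_and hv, val_neg hv, hv.2, hv.1]
  cases v I <;> cases v B <;> cases v (B.neg.box) <;> cases v A' <;> cases v A <;>
    cases v ((A'.and A).box) <;> cases v (A.box) <;> rfl

lemma t_stepABox (I B A' A : ILForm) :
    ILTaut ((((A'.and A).box).imp A'.box).imp ((((A'.and A).box).imp A.box).imp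
      ((I.imp (((B.and B.neg.box).and (A.and A.box)).imp ILForm.bot)).imp
        (((A'.box).imp I).imp
          (((B.and B.neg.box).and ((A'.and A).and ((A'.and A).box))).imp ILForm.bot))))) := by
  intro v hv; simp only [val_and hv, val_neg hv, hv.2, hv.1]
  cases v I <;> cases v B <;> cases v (B.neg.box) <;>
    cases v A' <;> cases v A <;> cases v ((A'.and A).box) <;> cases v (A'.box) <;>
    cases v (A.box) <;> rfl

lemma t_bigOr_l (m m' : List ILForm) : ILTaut ((bigOr m).imp (bigOr (m ++ m'))) := by
  intro v hv
  rw [hv.2, val_bigOr_append hv]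
  cases v (bigOr m) <;> cases v (bigOr m') <;> rfl

lemma t_bigOr_r (m m' : List ILForm) : ILTaut ((bigOr m').imp (bigOr (m ++ m'))) := by
  intro v hv
  rw [hv.2, val_bigOr_append hv]
  cases v (bigOr m) <;> cases v (bigOr m') <;> rfl

end Tauts

section Rules

variable {P : ILForm → Prop}

lemma Pt (hP : ILExtension P) {A : ILForm} (h : ILTaut A) : P A := hP.il (ILProv.taut h)

lemma imp_trans (hP : ILExtension P) {A B C : ILForm}
    (h1 : P (A.imp B)) (h2 : P (B.imp C)) : P (A.imp C) :=
  hP.mp (hP.mp (Pt hP (t_mono A B C)) h2) h1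

lemma Pand' (hP : ILExtension P) {A B : ILForm} (ha : P A) (hb : P B) : P (A.and B) :=
  hP.mp (hP.mp (Pt hP (t_and A B)) ha) hb

lemma Pcurry (hP : ILExtension P) {A B C : ILForm} (h : P ((A.and B).imp C)) :
    P (A.imp (B.imp C)) := hP.mp (Pt hP (t_curry A B C)) h

lemma Pflip_mp (hP : ILExtension P) {A B C : ILForm}
    (h : P (A.imp (B.imp C))) (hb : P B) : P (A.imp C) :=
  hP.mp (hP.mp (Pt hP (t_flip A B C)) h) hb

lemma box_mono (hP : ILExtension P) {A B : ILForm} (h : P (A.imp B)) :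
    P (A.box.imp B.box) := hP.mp (hP.il ILProv.K) (hP.nec h)

lemma rhd_of_imp (hP : ILExtension P) {A B : ILForm} (h : P (A.imp B)) :
    P (A.rhd B) := hP.mp (hP.il ILProv.J1) (hP.nec h)

lemma rhd_trans (hP : ILExtension P) {A B C : ILForm}
    (h1 : P (A.rhd B)) (h2 : P (B.rhd C)) : P (A.rhd C) :=
  hP.mp (hP.il ILProv.J2) (Pand' hP h1 h2)

lemma rhd_or (hP : ILExtension P) {A B C : ILForm}
    (h1 : P (A.rhd C)) (h2 : P (B.rhd C)) : P ((A.or B).rhd C) :=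
  hP.mp (hP.il ILProv.J3) (Pand' hP h1 h2)

lemma rhd_crit (hP : ILExtension P) (B : ILForm) : P (B.rhd (B.and B.neg.box)) := by
  have s1 : P (((B.and B.neg.box).neg).imp ((B.neg.box).imp B.neg)) := Pt hP (t_Cneg B)
  have s2 := box_mono hP s1
  have s3 : P ((((B.neg.box).imp B.neg).box).imp ((B.neg).box)) := hP.il ILProv.L
  have s4 : P ((((B.and B.neg.box).neg).box).imp (B.neg.box)) := imp_trans hP s2 s3
  have s5 : P (B.imp ((B.and B.neg.box).or ((B.and B.neg.box).dia))) :=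
    hP.mp (Pt hP (t_Lglue B)) s4
  exact rhd_trans hP (rhd_of_imp hP s5)
    (rhd_or hP (rhd_of_imp hP (Pt hP (t_id _))) (hP.il ILProv.J5))

lemma rhd_combine (hP : ILExtension P) (A' A : ILForm) (L' L : List ILForm) :
    P ((A'.neg.rhd (bigOr (L'.map ILForm.neg))).imp
      ((A.neg.rhd (bigOr (L.map ILForm.neg))).imp
        (((A'.and A).neg).rhd (bigOr ((L' ++ L).map ILForm.neg))))) := by
  have hmap : (L' ++ L).map ILForm.neg = L'.map ILForm.neg ++ L.map ILForm.neg :=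
    List.map_append
  rw [hmap]
  set m := L'.map ILForm.neg with hm
  set m' := L.map ILForm.neg with hm'
  have t2 : P ((bigOr m).rhd (bigOr (m ++ m'))) := rhd_of_imp hP (Pt hP (t_bigOr_l m m'))
  have t3 : P ((bigOr m').rhd (bigOr (m ++ m'))) := rhd_of_imp hP (Pt hP (t_bigOr_r m m'))
  have g1 : P ((A'.neg.rhd (bigOr m)).imp (A'.neg.rhd (bigOr (m ++ m')))) :=
    Pflip_mp hP (Pcurry hP (hP.il ILProv.J2)) t2
  have g2 : P ((A.neg.rhd (bigOr m')).imp (A.neg.rhd (bigOr (m ++ m')))) :=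
    Pflip_mp hP (Pcurry hP (hP.il ILProv.J2)) t3
  have g3 : P ((A'.neg.rhd (bigOr (m ++ m'))).imp ((A.neg.rhd (bigOr (m ++ m'))).imp
      ((A'.neg.or A.neg).rhd (bigOr (m ++ m'))))) := Pcurry hP (hP.il ILProv.J3)
  have t1 : P (((A'.and A).neg).rhd (A'.neg.or A.neg)) := rhd_of_imp hP (Pt hP (t_Nor A' A))
  have g4 : P (((A'.neg.or A.neg).rhd (bigOr (m ++ m'))).imp
      (((A'.and A).neg).rhd (bigOr (m ++ m')))) :=
    hP.mp (Pcurry hP (hP.il ILProv.J2)) t1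
  exact hP.mp (hP.mp (hP.mp (hP.mp (Pt hP (t_comb _ _ _ _ _ _)) g1) g2) g3) g4

end Rules

/- ======================= Derivations and MCS ======================= -/

def impList : List ILForm → ILForm → ILForm
  | [], A => A
  | x :: l, A => x.imp (impList l A)

section DerivMCS

variable {P : ILForm → Prop}

lemma impList_mp_thm (hP : ILExtension P) (l : List ILForm) (A B : ILForm) :
    P ((impList l (A.imp B)).imp ((impList l A).imp (impList l B))) := by
  induction l with
  | nil => exact Pt hP (t_id _)
  | cons x l ih => exact hP.mp (Pt hP (t_dist4 x _ _ _)) ih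

lemma imp_impList (hP : ILExtension P) (l : List ILForm) (A : ILForm) :
    P (A.imp (impList l A)) := by
  induction l with
  | nil => exact Pt hP (t_id _)
  | cons x l ih => exact imp_trans hP ih (Pt hP (t_w _ x))

lemma impList_append_r (hP : ILExtension P) (l l' : List ILForm) (A : ILForm) :
    P ((impList l A).imp (impList (l ++ l') A)) := by
  induction l with
  | nil => exact imp_impList hP l' A
  | cons x l ih => exact hP.mp (Pt hP (t_mono x _ _)) ih

lemma impList_append_l (hP : ILExtension P) (l l' : List ILForm) (A : ILForm) :
    P ((impList l A).imp (impList (l' ++ l) A)) := by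
  induction l' with
  | nil => exact Pt hP (t_id _)
  | cons y l' ih => exact imp_trans hP ih (Pt hP (t_w _ y))

lemma deriv_compact (hP : ILExtension P) {S : Set ILForm} {A : ILForm}
    (h : Deriv P S A) : ∃ l : List ILForm, (∀ x ∈ l, x ∈ S) ∧ P (impList l A) := by
  induction h with
  | thm h => exact ⟨[], by simp, h⟩
  | @mem A h => exact ⟨[A], by simpa using h, Pt hP (t_id _)⟩
  | mp h1 h2 ih1 ih2 =>
      obtain ⟨l1, hl1, hp1⟩ := ih1
      obtain ⟨l2, hl2, hp2⟩ := ih2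
      refine ⟨l1 ++ l2, ?_, ?_⟩
      · intro x hx; rcases List.mem_append.mp hx with h | h
        exacts [hl1 x h, hl2 x h]
      · exact hP.mp (hP.mp (impList_mp_thm hP (l1 ++ l2) _ _)
          (hP.mp (impList_append_r hP l1 l2 _) hp1))
          (hP.mp (impList_append_l hP l2 l1 _) hp2)

lemma deriv_of_impList (hP : ILExtension P) {S : Set ILForm} {A : ILForm} :
    ∀ l : List ILForm, Deriv P S (impList l A) → (∀ x ∈ l, x ∈ S) → Deriv P S A
  | [], d, _ => d
  | x :: l, d, hl =>
      deriv_of_impList hP l (Deriv.mp d (Deriv.mem (hl x List.mem_cons_self)))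
        (fun y hy => hl y (List.mem_cons_of_mem _ hy))

lemma deriv_insert {S : Set ILForm} {A X : ILForm}
    (h : Deriv P (insert A S) X) (hA : Deriv P S A) : Deriv P S X := by
  induction h with
  | thm h => exact .thm h
  | mem h =>
      rcases Set.mem_insert_iff.mp h with rfl | h
      · exact hA
      · exact .mem h
  | mp _ _ ih1 ih2 => exact .mp ih1 ih2

lemma mcs_thm {Γ : Set ILForm} (hΓ : ILMCS P Γ) {A : ILForm} (h : P A) : A ∈ Γ := by
  by_contra hA
  have h2 : ¬ ILConsistent P (insert A Γ) := hΓ.2 _ (Set.ssubset_insert hA)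
  exact hΓ.1 (deriv_insert (not_not.mp h2) (Deriv.thm h))

lemma mcs_mp {Γ : Set ILForm} (hΓ : ILMCS P Γ) {A B : ILForm}
    (h1 : A.imp B ∈ Γ) (h2 : A ∈ Γ) : B ∈ Γ := by
  by_contra hB
  have h3 : ¬ ILConsistent P (insert B Γ) := hΓ.2 _ (Set.ssubset_insert hB)
  exact hΓ.1 (deriv_insert (not_not.mp h3) (Deriv.mp (.mem h1) (.mem h2)))

lemma chain_mem {c : Set (Set ILForm)} (hchain : IsChain (· ⊆ ·) c) (hcne : c.Nonempty) :
    ∀ l : List ILForm, (∀ x ∈ l, x ∈ ⋃₀ c) → ∃ t ∈ c, ∀ x ∈ l, x ∈ t := by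
  intro l
  induction l with
  | nil => exact fun _ => ⟨hcne.choose, hcne.choose_spec, by simp⟩
  | cons a l ih =>
      intro hx
      obtain ⟨t1, ht1, ha⟩ := hx a List.mem_cons_self
      obtain ⟨t2, ht2, hl2⟩ := ih (fun y hy => hx y (List.mem_cons_of_mem _ hy))
      rcases eq_or_ne t1 t2 with rfl | hne
      · exact ⟨t1, ht1, fun y hy => by
          rcases List.mem_cons.mp hy with rfl | hy
          exacts [ha, hl2 y hy]⟩
      · rcases hchain ht1 ht2 hne with hsub | hsub
        · exact ⟨t2, ht2, fun y hy => by
            rcases List.mem_cons.mp hy with rfl | hy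
            exacts [hsub ha, hl2 y hy]⟩
        · exact ⟨t1, ht1, fun y hy => by
            rcases List.mem_cons.mp hy with rfl | hy
            exacts [ha, hsub (hl2 y hy)]⟩

lemma lindenbaum (hP : ILExtension P) {S : Set ILForm} (h : ILConsistent P S) :
    ∃ M, S ⊆ M ∧ ILMCS P M := by
  have hchainarg : ∀ c ⊆ {T | ILConsistent P T}, IsChain (· ⊆ ·) c → c.Nonempty →
      ∃ ub ∈ {T | ILConsistent P T}, ∀ s ∈ c, s ⊆ ub := by
    intro c hcS hchain hcne
    refine ⟨⋃₀ c, ?_, fun s hs => Set.subset_sUnion_of_mem hs⟩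
    intro hder
    obtain ⟨l, hl, hpl⟩ := deriv_compact hP hder
    obtain ⟨t, htc, hlt⟩ := chain_mem hchain hcne l hl
    exact hcS htc (deriv_of_impList hP l (Deriv.thm hpl) hlt)
  obtain ⟨M, hSM, hMax⟩ := zorn_subset_nonempty {T | ILConsistent P T} hchainarg S h
  refine ⟨M, hSM, hMax.1, ?_⟩
  intro T hMT hTc
  exact hMT.not_subset (hMax.2 hTc hMT.subset)

end DerivMCS

/- ======================= The main construction ======================= -/

def Dset (Γ : Set ILForm) (B : ILForm) (S : Set ILForm) : Set ILForm :=
  {X | X = B ∨ X = B.neg.box ∨ ∃ (A : ILForm) (L : List ILForm), (∀ C ∈ L, C ∈ S) ∧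
    (A.neg.rhd (bigOr (L.map ILForm.neg))) ∈ Γ ∧ (X = A ∨ X = A.box)}

lemma extract {P : ILForm → Prop} (hP : ILExtension P) {Γ : Set ILForm}
    (hΓ : ILMCS P Γ) (B : ILForm) (S : Set ILForm) :
    ∀ l : List ILForm, (∀ x ∈ l, x ∈ Dset Γ B S) →
      ∃ (A : ILForm) (LA : List ILForm), (∀ C ∈ LA, C ∈ S) ∧ (A.neg.rhd (bigOr (LA.map ILForm.neg))) ∈ Γ ∧
        P ((impList l ILForm.bot).imp
          (((B.and B.neg.box).and (A.and A.box)).imp ILForm.bot)) := by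
  intro l
  induction l with
  | nil =>
      intro _
      refine ⟨ILForm.bot.neg, [], by simp, ?_, Pt hP (t_w ILForm.bot _)⟩
      exact mcs_thm hΓ (rhd_of_imp hP (Pt hP (t_nn ILForm.bot)))
  | cons x l ih =>
      intro hx
      obtain ⟨A, LA, hLS, hmem, hI⟩ := ih (fun y hy => hx y (List.mem_cons_of_mem _ hy))
      rcases hx x List.mem_cons_self with hxe | hxe | ⟨A', L', hL', hmem', hxx⟩
      · subst hxe
        exact ⟨A, LA, hLS, hmem, hP.mp (Pt hP (t_stepB (impList l ILForm.bot) x A)) hI⟩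
      · subst hxe
        exact ⟨A, LA, hLS, hmem, hP.mp (Pt hP (t_stepBox (impList l ILForm.bot) B A)) hI⟩
      · refine ⟨A'.and A, L' ++ LA, ?_, ?_, ?_⟩
        · intro C hC; rcases List.mem_append.mp hC with h | h
          exacts [hL' C h, hLS C h]
        · exact mcs_mp hΓ (mcs_mp hΓ (mcs_thm hΓ (rhd_combine hP A' A L' LA)) hmem') hmem
        · rcases hxx with hxa | hxa
          · subst hxa
            exact hP.mp (hP.mp (Pt hP (t_stepA (impList l ILForm.bot) B x A))
              (box_mono hP (Pt hP (t_and_r x A)))) hI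
          · subst hxa
            exact hP.mp (hP.mp (hP.mp (Pt hP (t_stepABox (impList l ILForm.bot) B A' A))
              (box_mono hP (Pt hP (t_and_l A' A))))
              (box_mono hP (Pt hP (t_and_r A' A)))) hI

lemma Dset_consistent {P : ILForm → Prop} (hP : ILExtension P) {Γ : Set ILForm}
    (hΓ : ILMCS P Γ) (B : ILForm) (S : Set ILForm)
    (h : ∀ L : List ILForm, (∀ C ∈ L, C ∈ S) →
      (B.rhd (bigOr (L.map ILForm.neg))).neg ∈ Γ) :
    ILConsistent P (Dset Γ B S) := by
  intro hder
  obtain ⟨l, hl, hpl⟩ := deriv_compact hP hder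
  obtain ⟨A, LA, hLS, hGam, himp⟩ := extract hP hΓ B S l hl
  have hG : P ((((B.and B.neg.box).and (A.and A.box))).imp ILForm.bot) := hP.mp himp hpl
  have m : P ((A.neg.neg.box).imp A.box) := box_mono hP (Pt hP (t_nn A))
  have t : P ((B.and B.neg.box).imp ((A.neg).or (A.neg.dia))) :=
    hP.mp (hP.mp (Pt hP (t_main B A)) m) hG
  have rB : P (B.rhd A.neg) :=
    rhd_trans hP (rhd_crit hP B) (rhd_trans hP (rhd_of_imp hP t)
      (rhd_or hP (rhd_of_imp hP (Pt hP (t_id A.neg))) (hP.il ILProv.J5)))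
  have step : P ((A.neg.rhd (bigOr (LA.map ILForm.neg))).imp
      (B.rhd (bigOr (LA.map ILForm.neg)))) :=
    hP.mp (Pcurry hP (hP.il ILProv.J2)) rB
  have hBX : (B.rhd (bigOr (LA.map ILForm.neg))) ∈ Γ := mcs_mp hΓ (mcs_thm hΓ step) hGam
  have hnX : (B.rhd (bigOr (LA.map ILForm.neg))).neg ∈ Γ := h LA hLS
  exact hΓ.1 (Deriv.mp (Deriv.mem hnX) (Deriv.mem hBX))

/-- Existence of S-assuring successors. -/
theorem assuring_successor_exists (P : ILForm → Prop) (hP : ILExtension P)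
    (Γ : Set ILForm) (hΓ : ILMCS P Γ) (B : ILForm) (S : Set ILForm)
    (h : ∀ L : List ILForm, (∀ C ∈ L, C ∈ S) →
      (B.rhd (bigOr (L.map ILForm.neg))).neg ∈ Γ) :
    ∃ Δ : Set ILForm, ILMCS P Δ ∧ Assuring Γ Δ S ∧ B ∈ Δ ∧ B.neg.box ∈ Δ := by
  obtain ⟨Δ, hsub, hmcs⟩ := lindenbaum hP (Dset_consistent hP hΓ B S h)
  refine ⟨Δ, hmcs, ?_, hsub (Or.inl rfl), hsub (Or.inr (Or.inl rfl))⟩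
  intro A L hL hmem
  exact ⟨hsub (Or.inr (Or.inr ⟨A, L, hL, hmem, Or.inl rfl⟩)),
    hsub (Or.inr (Or.inr ⟨A, L, hL, hmem, Or.inr rfl⟩))⟩
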